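/- Let d ≥ 5 and let p = (x_1+1)² − x_2² − ⋯ − x_d² ∈ ℝ[x_1,…,x_d]. Then there exist no integer n and no complex Hermitian n×n matrices A_0, A_1, …, A_d with A_0 = I_n such that det(A_0 + x_1 A_1 + ⋯ + x_d A_d) = p(x) as polynomials in x_1,…,x_d. -/

import Mathlib

open Matrix Finset
open scoped ComplexOrder

variable {n : ℕ} {M : Matrix (Fin n) (Fin n) ℂ}

private lemma conj_eq {U X Y : Matrix (Fin n) (Fin n) ℂ}
    (hVU : star U * U = 1) (h : U * X * star U = U * Y * star U) : X = Y := by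
  have h2 := congrArg (fun Z => star U * Z * U) h
  simp only [← mul_assoc, hVU, one_mul] at h2
  rwa [mul_assoc, hVU, mul_one, mul_assoc, hVU, mul_one] at h2

private lemma det_one_add_smul_eig (hM : M.IsHermitian) (z : ℂ) :
    (1 + z • M).det = ∏ k, (1 + z * (hM.eigenvalues k : ℂ)) := by
  set U := (hM.eigenvectorUnitary : Matrix (Fin n) (Fin n) ℂ) with hU
  have hUV : U * star U = 1 := Matrix.mem_unitaryGroup_iff.mp hM.eigenvectorUnitary.2
  have hspec : M = U * Matrix.diagonal (RCLike.ofReal ∘ hM.eigenvalues) * star U :=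
    hM.spectral_theorem
  have hd : (Matrix.diagonal fun k => 1 + z * (hM.eigenvalues k : ℂ)) =
      1 + z • Matrix.diagonal (RCLike.ofReal ∘ hM.eigenvalues) := by
    rw [← Matrix.diagonal_one, ← Matrix.diagonal_smul, ← Matrix.diagonal_add]; rfl
  have key : U * (Matrix.diagonal fun k => 1 + z * (hM.eigenvalues k : ℂ)) * star U
      = 1 + z • M := by
    rw [hd, mul_add, add_mul, mul_one, hUV, mul_smul_comm, smul_mul_assoc, ← hspec]
  rw [← key, Matrix.det_mul, Matrix.det_mul]
  rw [show (U.det * (Matrix.diagonal fun k => 1 + z * (hM.eigenvalues k : ℂ)).det) * (star U).det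
    = (U * star U).det * (Matrix.diagonal fun k => 1 + z * (hM.eigenvalues k : ℂ)).det from by
      rw [Matrix.det_mul]; ring]
  rw [hUV, Matrix.det_one, one_mul, Matrix.det_diagonal]



private lemma herm_cubic (hM : M.IsHermitian) (b c : ℂ)
    (h : ∀ k, (hM.eigenvalues k : ℂ)^3 = b * (hM.eigenvalues k : ℂ)^2 + c * (hM.eigenvalues k : ℂ)) :
    M * M * M = b • (M * M) + c • M := by
  set U := (hM.eigenvectorUnitary : Matrix (Fin n) (Fin n) ℂ) with hU
  have hVU : star U * U = 1 := Matrix.mem_unitaryGroup_iff'.mp hM.eigenvectorUnitary.2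
  set D := Matrix.diagonal (RCLike.ofReal ∘ hM.eigenvalues : Fin n → ℂ) with hD
  have hspec : M = U * D * star U := hM.spectral_theorem
  have h2 : M * M = U * (D * D) * star U := by
    rw [hspec]; rw [show U * D * star U * (U * D * star U) = U * (D * (star U * U) * D) * star U
      from by simp only [mul_assoc]]
    rw [hVU, mul_one, mul_assoc]
  have h3 : M * M * M = U * (D * D * D) * star U := by
    rw [h2, hspec]; rw [show U * (D * D) * star U * (U * D * star U)
      = U * (D * D * (star U * U) * D) * star U from by simp only [mul_assoc]]
    rw [hVU, mul_one]
  have hdd : D * D * D = b • (D * D) + c • D := by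
    rw [hD]
    simp only [Matrix.diagonal_mul_diagonal, ← Matrix.diagonal_smul, Matrix.diagonal_add]
    exact congrArg Matrix.diagonal (funext fun k => by
      simp only [Pi.add_apply, Pi.smul_apply, Pi.mul_apply, Function.comp_apply, smul_eq_mul]
      have hk := h k
      simp only [show (RCLike.ofReal : ℝ → ℂ) = Complex.ofReal from rfl]
      linear_combination hk)
  rw [h3, hdd]
  rw [mul_add, add_mul, mul_smul_comm, smul_mul_assoc, mul_smul_comm, smul_mul_assoc, ← h2, ← hspec]

private lemma herm_quad (hM : M.IsHermitian)
    (h : ∀ k, (hM.eigenvalues k : ℂ)^2 = (hM.eigenvalues k : ℂ)) :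
    M * M = M := by
  set U := (hM.eigenvectorUnitary : Matrix (Fin n) (Fin n) ℂ) with hU
  have hVU : star U * U = 1 := Matrix.mem_unitaryGroup_iff'.mp hM.eigenvectorUnitary.2
  set D := Matrix.diagonal (RCLike.ofReal ∘ hM.eigenvalues : Fin n → ℂ) with hD
  have hspec : M = U * D * star U := hM.spectral_theorem
  have h2 : M * M = U * (D * D) * star U := by
    rw [hspec]; rw [show U * D * star U * (U * D * star U) = U * (D * (star U * U) * D) * star U
      from by simp only [mul_assoc]]
    rw [hVU, mul_one, mul_assoc]
  have hdd : D * D = D := by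
    rw [hD, Matrix.diagonal_mul_diagonal]
    exact congrArg Matrix.diagonal (funext fun k => by
      have hk := h k
      simp only [Pi.mul_apply, Function.comp_apply,
        show (RCLike.ofReal : ℝ → ℂ) = Complex.ofReal from rfl, sq] at *
      exact hk)
  rw [h2, hdd, ← hspec]



private lemma core (hM : M.IsHermitian) (a r2 : ℝ)
    (hdet : ∀ z : ℂ, (1 + z • M).det = (1 + z * (a:ℂ))^2 - z^2 * (r2:ℂ)) :
    M * M * M = (2*(a:ℂ)) • (M * M) + ((r2:ℂ) - (a:ℂ)^2) • M := by
  apply herm_cubic hM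
  intro k
  set μ : ℂ := (hM.eigenvalues k : ℂ) with hμdef
  by_cases hμ : μ = 0
  · simp [hμ]
  have hz : (0:ℂ) = (1 + (-μ⁻¹) * a)^2 - (-μ⁻¹)^2 * r2 := by
    rw [← hdet (-μ⁻¹), det_one_add_smul_eig hM]
    rw [Finset.prod_eq_zero (Finset.mem_univ k)]
    rw [← hμdef]
    field_simp
    norm_num
  field_simp at hz
  linear_combination (-μ) * hz

private lemma core2 (hM : M.IsHermitian)
    (hdet : ∀ z : ℂ, (1 + z • M).det = (1 + z)^2) :
    M * M = M := by
  apply herm_quad hM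
  intro k
  set μ : ℂ := (hM.eigenvalues k : ℂ) with hμdef
  by_cases hμ : μ = 0
  · simp [hμ]
  have hz : (0:ℂ) = (1 + (-μ⁻¹))^2 := by
    rw [← hdet (-μ⁻¹), det_one_add_smul_eig hM]
    rw [Finset.prod_eq_zero (Finset.mem_univ k)]
    rw [← hμdef]
    field_simp
    norm_num
  have h1 : 1 + (-μ⁻¹) = 0 := by
    have := pow_eq_zero_iff (n := 2) (by norm_num) |>.mp hz.symm
    exact this
  have : μ = 1 := by field_simp at h1; linear_combination h1
  rw [this]; ring


private lemma herm_real_smul {n : ℕ} {B : Matrix (Fin n) (Fin n) ℂ} (hB : B.IsHermitian) (r : ℝ) :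
    ((r:ℂ) • B).IsHermitian := by
  unfold Matrix.IsHermitian at *
  rw [Matrix.conjTranspose_smul, hB, Complex.star_def, Complex.conj_ofReal]

private lemma sum_ite3 {d n : ℕ} (A : Fin d → Matrix (Fin n) (Fin n) ℂ) (i0 i j : Fin d)
    (hi : i ≠ i0) (hj : j ≠ i0) (hij : i ≠ j) (a b c : ℂ) :
    (∑ k, (if k = i0 then a else if k = i then b else if k = j then c else 0) • A k)
      = a • A i0 + b • A i + c • A j := by
  rw [← Finset.sum_subset (s₁ := ({i0, i, j} : Finset (Fin d))) (Finset.subset_univ _)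
    (fun k _ hk => by
      simp only [Finset.mem_insert, Finset.mem_singleton, not_or] at hk
      obtain ⟨h1, h2, h3⟩ := hk
      simp [h1, h2, h3])]
  rw [Finset.sum_insert (by simp [Ne.symm hi, Ne.symm hj]),
    Finset.sum_insert (by simp [hij]), Finset.sum_singleton]
  simp [hi, hj, hij, Ne.symm hij, ← add_assoc]

private lemma sum_ite3_sq {d : ℕ} (i0 i j : Fin d)
    (hi : i ≠ i0) (hj : j ≠ i0) (hij : i ≠ j) (a b c : ℂ) :
    (∑ k ∈ Finset.univ \ {i0},
        (if k = i0 then a else if k = i then b else if k = j then c else 0)^2) = b^2 + c^2 := by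
  rw [← Finset.sum_subset (s₁ := ({i, j} : Finset (Fin d)))
    (by intro k hk; simp only [Finset.mem_insert, Finset.mem_singleton] at hk
        rcases hk with rfl | rfl <;> simp [hi, hj])
    (fun k hk hk2 => by
      simp only [Finset.mem_sdiff, Finset.mem_univ, Finset.mem_singleton, true_and] at hk
      simp only [Finset.mem_insert, Finset.mem_singleton, not_or] at hk2
      obtain ⟨h2, h3⟩ := hk2
      simp [hk, h2, h3])]
  rw [Finset.sum_insert (by simp [hij]), Finset.sum_singleton]
  simp [hi, hj, hij, Ne.symm hij]




private lemma key3 {d n : ℕ} (A : Fin d → Matrix (Fin n) (Fin n) ℂ) (hherm : ∀ i, (A i).IsHermitian)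
    (i0 : Fin d)
    (Hdet : ∀ x : Fin d → ℂ, (1 + ∑ i, x i • A i).det
      = (x i0 + 1)^2 - ∑ i ∈ Finset.univ \ {i0}, (x i)^2)
    (i j : Fin d) (hi : i ≠ i0) (hj : j ≠ i0) (hij : i ≠ j) (s t u : ℝ) :
    ((s:ℂ) • A i0 + (t:ℂ) • A i + (u:ℂ) • A j) * ((s:ℂ) • A i0 + (t:ℂ) • A i + (u:ℂ) • A j)
        * ((s:ℂ) • A i0 + (t:ℂ) • A i + (u:ℂ) • A j)
      = (2*(s:ℂ)) • (((s:ℂ) • A i0 + (t:ℂ) • A i + (u:ℂ) • A j)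
          * ((s:ℂ) • A i0 + (t:ℂ) • A i + (u:ℂ) • A j))
        + (((t^2+u^2 : ℝ):ℂ) - (s:ℂ)^2) • ((s:ℂ) • A i0 + (t:ℂ) • A i + (u:ℂ) • A j) := by
  set M := (s:ℂ) • A i0 + (t:ℂ) • A i + (u:ℂ) • A j with hM
  have hMh : M.IsHermitian :=
    ((herm_real_smul (hherm i0) s).add (herm_real_smul (hherm i) t)).add
      (herm_real_smul (hherm j) u)
  exact core hMh s (t^2+u^2) (fun z => by
    have h := Hdet (fun k => if k = i0 then z*s else if k = i then z*t else if k = j then z*u else 0)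
    rw [sum_ite3 A i0 i j hi hj hij, sum_ite3_sq i0 i j hi hj hij] at h
    simp only [if_pos rfl] at h
    rw [show (z*(s:ℂ)) • A i0 + (z*(t:ℂ)) • A i + (z*(u:ℂ)) • A j = z • M from by
      rw [hM, smul_add, smul_add, smul_smul, smul_smul, smul_smul]] at h
    rw [h]
    push_cast
    ring)


private lemma lin_aux {V : Type*} [AddCommGroup V] {a b c d : V}
    (h : c = d) (habel : a - b = c - d) : a = b := by
  have h0 : a - b = 0 := by rw [habel, h, sub_self]
  exact sub_eq_zero.mp h0

private lemma double_eq_zero {V : Type*} [AddCommGroup V] [Module ℂ V] {x : V}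
    (h : x + x = 0) : x = 0 := by
  have h2 : (2:ℂ) • x = 0 := by rw [two_smul]; exact h
  rcases smul_eq_zero.mp h2 with h3 | h3
  · norm_num at h3
  · exact h3

private lemma lin_aux2 {V : Type*} [AddCommGroup V] [Module ℂ V] {a b c d : V}
    (h : c = d) (habel : (a - b) + (a - b) = c - d) : a = b := by
  have h0 : (a - b) + (a - b) = 0 := by rw [habel, h, sub_self]
  exact sub_eq_zero.mp (double_eq_zero h0)



private lemma structure_lemma {P A : Matrix (Fin n) (Fin n) ℂ}
    (hPh : P.IsHermitian) (hAh : A.IsHermitian)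
    (hP : P * P = P) (hA3 : A * A * A = A)
    (hpp : (P+A)*(P+A)*(P+A) = (2:ℂ) • ((P+A)*(P+A)))
    (hpm : (P-A)*(P-A)*(P-A) = (2:ℂ) • ((P-A)*(P-A))) :
    P * A = A ∧ A * P = A ∧ A * A = P := by
  -- expansions
  have e3p : (P+A)*(P+A)*(P+A) =
      ((P*P)*P + (P*P)*A + P*(A*P) + P*(A*A)) +
      (A*(P*P) + A*(P*A) + A*(A*P) + A*A*A) := by noncomm_ring
  have e3m : (P-A)*(P-A)*(P-A) =
      ((P*P)*P - (P*P)*A - P*(A*P) + P*(A*A)) +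
      (-(A*(P*P)) + A*(P*A) + A*(A*P) - A*A*A) := by noncomm_ring
  have e2p : (P+A)*(P+A) = (P*P + P*A) + (A*P + A*A) := by noncomm_ring
  have e2m : (P-A)*(P-A) = (P*P - P*A) + (-(A*P) + A*A) := by noncomm_ring
  rw [e3p, e2p, two_smul] at hpp
  rw [e3m, e2m, two_smul] at hpm
  simp only [hP, hA3] at hpp hpm
  -- C21 : P*(A*P) + A = P*A + A*P
  have C21 : P*(A*P) + A = P*A + A*P := by
    apply lin_aux2 (c := ((P + P*A + P*(A*P) + P*(A*A)) + (A*P + A*(P*A) + A*(A*P) + A))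
        + ((P - P*A) + (-(A*P) + A*A) + ((P - P*A) + (-(A*P) + A*A))))
      (d := ((P + P*A) + (A*P + A*A) + ((P + P*A) + (A*P + A*A)))
        + ((P - P*A - P*(A*P) + P*(A*A)) + (-(A*P) + A*(P*A) + A*(A*P) - A)))
    · rw [hpp, hpm]
    · abel
  have C12 : P*(A*A) + A*(P*A) + A*(A*P) = P + (A*A + A*A) := by
    apply lin_aux2 (c := ((P + P*A + P*(A*P) + P*(A*A)) + (A*P + A*(P*A) + A*(A*P) + A))
        + ((P - P*A - P*(A*P) + P*(A*A)) + (-(A*P) + A*(P*A) + A*(A*P) - A)))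
      (d := ((P + P*A) + (A*P + A*A) + ((P + P*A) + (A*P + A*A)))
        + ((P - P*A) + (-(A*P) + A*A) + ((P - P*A) + (-(A*P) + A*A))))
    · rw [hpp, hpm]
    · abel
  -- Q machinery
  set Q : Matrix (Fin n) (Fin n) ℂ := 1 - P with hQdef
  have hQP : Q * P = 0 := by rw [hQdef, sub_mul, one_mul, hP, sub_self]
  have hPQ : P * Q = 0 := by rw [hQdef, mul_sub, mul_one, hP, sub_self]
  have hQAQ : Q * A * Q = 0 := by
    have e : Q * A * Q = (P*(A*P) + A) - (P*A + A*P) := by rw [hQdef]; noncomm_ring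
    rw [e, C21, sub_self]
  have hQA_eq : Q * A = Q * A * P := by
    have h1 : Q * A * Q = Q * A - Q * A * P := by rw [hQdef]; noncomm_ring
    rw [h1] at hQAQ
    exact (sub_eq_zero.mp hQAQ)
  -- QBQ = 0
  have hQBQ : Q * (A*A) * Q = 0 := by
    have h5 := congrArg (fun Z => Q * Z * Q) C12
    rw [show Q * (P*(A*A) + A*(P*A) + A*(A*P)) * Q
        = (Q*P)*((A*A)*Q) + Q*(A*(P*A))*Q + (Q*(A*A))*(P*Q) from by noncomm_ring,
      show Q * (P + (A*A + A*A)) * Q = (Q*P)*Q + (Q*(A*A)*Q + Q*(A*A)*Q) from by noncomm_ring,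
      hQP, hPQ, zero_mul, mul_zero, zero_mul, add_zero, zero_add, zero_add] at h5
    have h6 : Q*(A*(P*A))*Q = Q*(A*A)*Q := by
      rw [show Q*(A*(P*A))*Q = (Q*A*P)*(A*Q) from by noncomm_ring, ← hQA_eq,
        show (Q*A)*(A*Q) = Q*(A*A)*Q from by noncomm_ring]
    rw [h6] at h5
    exact (add_eq_left.mp h5.symm)
  have hQh : Q.conjTranspose = Q := by
    rw [hQdef, Matrix.conjTranspose_sub, Matrix.conjTranspose_one, hPh.eq]
  have hQA : Q * A = 0 := by
    rw [← Matrix.self_mul_conjTranspose_eq_zero]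
    rw [Matrix.conjTranspose_mul, hAh.eq, hQh]
    rw [show Q*A*(A*Q) = Q*(A*A)*Q from by noncomm_ring]
    exact hQBQ
  have hPA : P * A = A := by
    have : (1 - P) * A = 0 := hQA
    rw [sub_mul, one_mul, sub_eq_zero] at this
    exact this.symm
  have hAQ : A * Q = 0 := by
    have := congrArg Matrix.conjTranspose hQA
    rwa [Matrix.conjTranspose_mul, hAh.eq, hQh, Matrix.conjTranspose_zero] at this
  have hAP : A * P = A := by
    have : A * (1 - P) = 0 := hAQ
    rw [mul_sub, mul_one, sub_eq_zero] at this
    exact this.symm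
  refine ⟨hPA, hAP, ?_⟩
  -- A*A = P from C12
  have h7 : P*(A*A) = A*A := by rw [← mul_assoc, hPA]
  have h8 : A*(P*A) = A*A := by rw [hPA]
  have h9 : A*(A*P) = A*A := by rw [hAP]
  rw [h7, h8, h9] at C12
  exact lin_aux C12 (by abel)




private lemma anti_lemma {P A B : Matrix (Fin n) (Fin n) ℂ}
    (hP : P * P = P)
    (hPA : P * A = A) (hAP : A * P = A) (hA2 : A * A = P)
    (hPB : P * B = B) (hBP : B * P = B) (hB2 : B * B = P)
    (r1 : (P+A+B)*(P+A+B)*(P+A+B) = (2:ℂ) • ((P+A+B)*(P+A+B)) + (P+A+B))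
    (r2 : (P+A-B)*(P+A-B)*(P+A-B) = (2:ℂ) • ((P+A-B)*(P+A-B)) + (P+A-B)) :
    A * B = -(B * A) := by
  have h3 : (P+A+B)*(P+A+B)*(P+A+B) + (P+A-B)*(P+A-B)*(P+A-B)
      = ((2:ℂ) • ((P+A+B)*(P+A+B)) + (P+A+B)) + ((2:ℂ) • ((P+A-B)*(P+A-B)) + (P+A-B)) := by
    rw [r1, r2]
  rw [show (P+A+B)*(P+A+B)*(P+A+B) =
      ((P*P)*P + (P*P)*A + (P*P)*B + (P*A)*P + P*(A*A) + (P*A)*B + (P*B)*P + (P*B)*A + P*(B*B))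
      + ((A*P)*P + (A*P)*A + (A*P)*B + (A*A)*P + (A*A)*A + (A*A)*B + A*(B*P) + A*(B*A) + A*(B*B))
      + ((B*P)*P + (B*P)*A + (B*P)*B + B*(A*P) + B*(A*A) + B*(A*B) + (B*B)*P + (B*B)*A + (B*B)*B)
    from by noncomm_ring] at h3
  rw [show (P+A-B)*(P+A-B)*(P+A-B) =
      ((P*P)*P + (P*P)*A - (P*P)*B + (P*A)*P + P*(A*A) - (P*A)*B - (P*B)*P - (P*B)*A + P*(B*B))
      + ((A*P)*P + (A*P)*A - (A*P)*B + (A*A)*P + (A*A)*A - (A*A)*B - A*(B*P) - A*(B*A) + A*(B*B))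
      + (-((B*P)*P) - (B*P)*A + (B*P)*B - B*(A*P) - B*(A*A) + B*(A*B) + (B*B)*P + (B*B)*A - (B*B)*B)
    from by noncomm_ring] at h3
  rw [show (P+A+B)*(P+A+B) =
      (P*P + P*A + P*B) + (A*P + A*A + A*B) + (B*P + B*A + B*B) from by noncomm_ring] at h3
  rw [show (P+A-B)*(P+A-B) =
      (P*P + P*A - P*B) + (A*P + A*A - A*B) + (-(B*P) - B*A + B*B) from by noncomm_ring] at h3
  simp only [two_smul] at h3
  simp only [hP, hPA, hAP, hA2, hPB, hBP, hB2] at h3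
  have hBAB : B*(A*B) = -A := lin_aux2 h3 (by abel)
  have h9 := congrArg (fun Z => B * Z) hBAB
  rw [show B*(B*(A*B)) = (B*B)*(A*B) from by noncomm_ring, hB2,
    show P*(A*B) = (P*A)*B from by noncomm_ring, hPA, mul_neg] at h9
  exact h9


private lemma cancel_two {t : ℂ} (h : -t = t) : t = 0 := by
  have h3 : (2:ℂ) * t = 0 := by linear_combination -h
  rcases mul_eq_zero.mp h3 with h4 | h4
  · norm_num at h4
  · exact h4

private lemma no_four (X : Fin 4 → Matrix (Fin 2) (Fin 2) ℂ)
    (hherm : ∀ i, (X i).IsHermitian)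
    (hsq : ∀ i, X i * X i = 1)
    (hanti : ∀ i j, i ≠ j → X i * X j = -(X j * X i)) : False := by
  have htr : ∀ i, (X i).trace = 0 := by
    intro i
    obtain ⟨j, hj⟩ : ∃ j, j ≠ i := by
      rcases Decidable.eq_or_ne i 0 with rfl | h
      · exact ⟨1, by decide⟩
      · exact ⟨0, Ne.symm h⟩
    have h1 : X j * (X i * X j) = -(X i) := by
      rw [show X i * X j = -(X j * X i) from hanti i j hj.symm]
      rw [show X j * -(X j * X i) = -((X j * X j) * X i) from by noncomm_ring, hsq, one_mul]
    have h2 : (X j * (X i * X j)).trace = (X i).trace := by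
      rw [Matrix.trace_mul_comm]
      rw [show (X i * X j) * X j = X i * (X j * X j) from by noncomm_ring, hsq, mul_one]
    rw [h1, Matrix.trace_neg] at h2
    exact cancel_two h2
  have horth : ∀ i j, i ≠ j → (X i * X j).trace = 0 := by
    intro i j hij
    have h2 := congrArg Matrix.trace (hanti i j hij)
    rw [Matrix.trace_neg, Matrix.trace_mul_comm (X j) (X i)] at h2
    exact cancel_two h2.symm
  have hnorm : ∀ i, (X i * X i).trace = 2 := by
    intro i; rw [hsq, Matrix.trace_one]; simp
  have h00 : ∀ i, X i 0 0 = ((X i 0 0).re : ℂ) := by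
    intro i
    have := congrFun (congrFun (hherm i).eq 0) 0
    rw [Matrix.conjTranspose_apply] at this
    exact ((Complex.conj_eq_iff_re).mp this).symm
  have h01 : ∀ i, X i 0 1 = (starRingEnd ℂ) (X i 1 0) := by
    intro i
    have := congrFun (congrFun (hherm i).eq 0) 1
    rw [Matrix.conjTranspose_apply] at this
    exact this.symm
  have h11 : ∀ i, X i 1 1 = -(X i 0 0) := by
    intro i
    have := htr i
    rw [Matrix.trace_fin_two] at this
    linear_combination this
  have httr : ∀ i j, (X i * X j).trace
      = X i 0 0 * X j 0 0 + X i 0 1 * X j 1 0 + X i 1 0 * X j 0 1 + X i 1 1 * X j 1 1 := by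
    intro i j
    rw [Matrix.trace_fin_two]
    simp [Matrix.mul_apply, Fin.sum_univ_two]
    ring
  set v : Fin 4 → EuclideanSpace ℝ (Fin 3) :=
    fun i => WithLp.toLp 2 ![(X i 0 0).re, (X i 1 0).re, (X i 1 0).im] with hv
  have hinner : ∀ i j, (inner ℝ (v i) (v j) : ℝ) = ((X i * X j).trace).re / 2 := by
    intro i j
    have ht := httr i j
    rw [h01 i, h01 j, h11 i, h11 j, h00 i, h00 j] at ht
    rw [ht]
    simp only [PiLp.inner_apply, RCLike.inner_apply, conj_trivial, hv, PiLp.toLp_apply]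
    rw [Fin.sum_univ_three]
    simp only [Matrix.cons_val_zero, Matrix.cons_val_one, Matrix.head_cons,
      Matrix.cons_val_two, Matrix.tail_cons]
    simp [Complex.add_re, Complex.mul_re, Complex.conj_re, Complex.conj_im,
      Complex.ofReal_re, Complex.ofReal_im]
    ring
  have hON : Orthonormal ℝ v := by
    rw [orthonormal_iff_ite]
    intro i j
    by_cases hij : i = j
    · subst hij
      rw [if_pos rfl, hinner, hnorm]
      norm_num
    · rw [if_neg hij, hinner, horth i j hij]
      norm_num
  have hli := hON.linearIndependent
  have hcard := hli.fintype_card_le_finrank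
  rw [finrank_euclideanSpace_fin] at hcard
  simp at hcard


private lemma reduction {n : ℕ} {P : Matrix (Fin n) (Fin n) ℂ} (hPh : P.IsHermitian)
    (hP : P * P = P) (hdet4 : (1 + P).det = 4)
    (G : Fin 4 → Matrix (Fin n) (Fin n) ℂ) (hGh : ∀ i, (G i).IsHermitian)
    (hPG : ∀ i, P * G i = G i) (hGP : ∀ i, G i * P = G i) (hG2 : ∀ i, G i * G i = P)
    (hGanti : ∀ i j, i ≠ j → G i * G j = -(G j * G i)) : False := by
  classical
  set U := (hPh.eigenvectorUnitary : Matrix (Fin n) (Fin n) ℂ) with hU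
  have hUV : U * star U = 1 := Matrix.mem_unitaryGroup_iff.mp hPh.eigenvectorUnitary.2
  have hVU : star U * U = 1 := Matrix.mem_unitaryGroup_iff'.mp hPh.eigenvectorUnitary.2
  set ev := hPh.eigenvalues with hev
  set D := Matrix.diagonal (RCLike.ofReal ∘ ev : Fin n → ℂ) with hDdef
  have hspec : P = U * D * star U := hPh.spectral_theorem
  have hD : star U * P * U = D := by
    rw [hspec, show star U * (U * D * star U) * U = (star U * U) * D * (star U * U) from by
      noncomm_ring, hVU, one_mul, mul_one]
  have hconjmul : ∀ Xm Ym : Matrix (Fin n) (Fin n) ℂ,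
      star U * (Xm * Ym) * U = (star U * Xm * U) * (star U * Ym * U) := by
    intro Xm Ym
    rw [show (star U * Xm * U) * (star U * Ym * U) = star U * (Xm * (U * star U) * Ym) * U from by
      noncomm_ring, hUV, mul_one]
  set B : Fin 4 → Matrix (Fin n) (Fin n) ℂ := fun i => star U * G i * U with hB
  have hDD : D * D = D := by
    rw [← hD, ← hconjmul, hP]
  have ev01 : ∀ k, ev k = 0 ∨ ev k = 1 := by
    intro k
    have h1 := congrFun (congrFun hDD k) k
    rw [hDdef, Matrix.diagonal_mul_diagonal] at h1
    rw [Matrix.diagonal_apply_eq, Matrix.diagonal_apply_eq] at h1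
    simp only [Function.comp_apply, show (RCLike.ofReal : ℝ → ℂ) = Complex.ofReal from rfl] at h1
    have h2 : ev k * ev k = ev k := by exact_mod_cast h1
    rcases mul_eq_zero.mp (show ev k * (ev k - 1) = 0 from by linear_combination h2) with h | h
    · exact Or.inl h
    · exact Or.inr (by linarith [sub_eq_zero.mp h])
  have prod4 : ∏ k, (1 + (ev k : ℂ)) = 4 := by
    have h := det_one_add_smul_eig hPh (1:ℂ)
    rw [one_smul] at h
    simp only [one_mul] at h
    rw [← h, hdet4]
  set S : Finset (Fin n) := Finset.univ.filter (fun k => ev k = 1) with hS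
  have hprod2 : ((2:ℂ)) ^ S.card = 4 := by
    have hsplit := Finset.prod_filter_mul_prod_filter_not Finset.univ
      (fun k => ev k = 1) (fun k => (1 + (ev k:ℂ)))
    rw [← hS] at hsplit
    have h1 : ∏ k ∈ S, (1 + (ev k:ℂ)) = 2 ^ S.card := by
      rw [show ∏ k ∈ S, (1 + (ev k:ℂ)) = ∏ _k ∈ S, (2:ℂ) from Finset.prod_congr rfl
        (fun x hx => by rw [(Finset.mem_filter.mp hx).2]; norm_num), Finset.prod_const]
    have h2 : ∏ k ∈ Finset.univ.filter (fun k => ¬ ev k = 1), (1 + (ev k:ℂ)) = 1 := by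
      apply Finset.prod_eq_one; intro x hx
      rcases ev01 x with h | h
      · rw [h]; norm_num
      · exact absurd h (Finset.mem_filter.mp hx).2
    rw [h1, h2, mul_one, prod4] at hsplit
    exact hsplit
  have hScard : S.card = 2 := by
    have h5 : (2:ℕ)^S.card = 4 := by exact_mod_cast hprod2
    exact Nat.pow_right_injective (le_refl 2) (h5.trans (by norm_num))
  have e : Fin 2 ≃ {x // x ∈ S} := (finCongr hScard).symm.trans S.equivFin.symm
  have hSev : ∀ x : {x // x ∈ S}, ev x = 1 := fun x => (Finset.mem_filter.mp x.2).2
  have hnotS : ∀ k, k ∉ S → ev k = 0 := by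
    intro k hk
    rcases ev01 k with h | h
    · exact h
    · exact absurd (Finset.mem_filter.mpr ⟨Finset.mem_univ k, h⟩) hk
  -- conjugated matrices
  have hBherm : ∀ i, (B i).IsHermitian := by
    intro i
    show (star U * G i * U).IsHermitian
    unfold Matrix.IsHermitian
    rw [Matrix.star_eq_conjTranspose, Matrix.conjTranspose_mul, Matrix.conjTranspose_mul,
      Matrix.conjTranspose_conjTranspose, (hGh i).eq, mul_assoc]
  have hDB : ∀ i, D * B i = B i := by
    intro i
    show D * (star U * G i * U) = star U * G i * U
    rw [← hD, ← hconjmul, hPG]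
  have hBD : ∀ i, B i * D = B i := by
    intro i
    show (star U * G i * U) * D = star U * G i * U
    rw [← hD, ← hconjmul, hGP]
  have hB2 : ∀ i, B i * B i = D := by
    intro i
    show (star U * G i * U) * (star U * G i * U) = D
    rw [← hconjmul, hG2, hD]
  have hBanti : ∀ i j, i ≠ j → B i * B j = -(B j * B i) := by
    intro i j hij
    show (star U * G i * U) * (star U * G j * U) = -((star U * G j * U) * (star U * G i * U))
    rw [← hconjmul, ← hconjmul, hGanti i j hij]
    noncomm_ring
  -- rows vanish off S
  have hrow : ∀ i k l, k ∉ S → B i k l = 0 := by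
    intro i k l hk
    have h1 := congrFun (congrFun (hDB i) k) l
    rw [hDdef, Matrix.diagonal_mul] at h1
    simp only [Function.comp_apply, hnotS k hk, Complex.ofReal_zero,
      show (RCLike.ofReal : ℝ → ℂ) = Complex.ofReal from rfl, zero_mul] at h1
    exact h1.symm
  -- restriction to 2x2
  set res : Matrix (Fin n) (Fin n) ℂ → Matrix (Fin 2) (Fin 2) ℂ :=
    fun Xm => Matrix.of (fun a b => Xm (e a) (e b)) with hres
  have hresmul : ∀ Xm Ym : Matrix (Fin n) (Fin n) ℂ, (∀ k l, k ∉ S → Ym k l = 0) →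
      res Xm * res Ym = res (Xm * Ym) := by
    intro Xm Ym hY
    ext a b
    rw [Matrix.mul_apply]
    simp only [hres, Matrix.of_apply]
    rw [Matrix.mul_apply]
    rw [← Finset.sum_subset (Finset.subset_univ S)
      (fun k _ hk => by rw [hY k _ hk, mul_zero])]
    rw [← Finset.sum_coe_sort S (fun k => Xm (e a) k * Ym k (e b))]
    exact Equiv.sum_comp e (fun s : {x // x ∈ S} => Xm (e a) s * Ym s (e b))
  have hresD : res D = 1 := by
    ext a b
    simp only [hres, Matrix.of_apply, hDdef]
    by_cases hab : a = b
    · subst hab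
      rw [Matrix.diagonal_apply_eq, Matrix.one_apply_eq]
      simp [hSev (e a), show (RCLike.ofReal : ℝ → ℂ) = Complex.ofReal from rfl]
    · have : (e a : Fin n) ≠ (e b : Fin n) :=
        fun hh => hab (e.injective (Subtype.ext hh))
      rw [Matrix.diagonal_apply_ne _ this, Matrix.one_apply_ne hab]
  have hresneg : ∀ Xm : Matrix (Fin n) (Fin n) ℂ, res (-Xm) = -(res Xm) := by
    intro Xm; ext a b; simp [hres]
  -- final four matrices
  apply no_four (fun i => res (B i))
  · intro i
    unfold Matrix.IsHermitian
    ext a b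
    rw [Matrix.conjTranspose_apply]
    simp only [hres, Matrix.of_apply]
    have := congrFun (congrFun (hBherm i).eq (e a)) (e b)
    rw [Matrix.conjTranspose_apply] at this
    exact this
  · intro i
    rw [hresmul _ _ (hrow i), hB2, hresD]
  · intro i j hij
    have hne : (⟨i.val, by omega⟩ : Fin 4) ≠ ⟨j.val, by omega⟩ := hij
    rw [hresmul _ _ (hrow j), hresmul _ _ (hrow i), hBanti i j hij, hresneg]



open MvPolynomial in
/-- For `d ≥ 5`, the RZ polynomial `p = (x_1+1)² − x_2² − ⋯ − x_d²` admits no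
self-adjoint determinantal representation `det(A_0 + x_1 A_1 + ⋯ + x_d A_d) = p(x)`
with complex Hermitian matrices of any size `n` and `A_0 = I`.
(The variable `x_1` is indexed by `⟨0, _⟩ : Fin d` and `x_{j+1}` by `⟨j, _⟩`.) -/
theorem stmt10 {d : ℕ} (hd : 5 ≤ d) (p : MvPolynomial (Fin d) ℝ)
    (hp : p = (X (⟨0, by omega⟩ : Fin d) + 1) ^ 2 -
      ∑ i ∈ Finset.univ \ {(⟨0, by omega⟩ : Fin d)}, (X i) ^ 2) :
    ¬ ∃ (n : ℕ) (A0 : Matrix (Fin n) (Fin n) ℂ)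
        (A : Fin d → Matrix (Fin n) (Fin n) ℂ),
      A0 = 1 ∧ A0.IsHermitian ∧ (∀ i, (A i).IsHermitian) ∧
      Matrix.det (Matrix.of fun k l =>
          C (A0 k l) + ∑ i, X i * C (A i k l)) =
        MvPolynomial.map (algebraMap ℝ ℂ) p := by
  rintro ⟨n, A0, A, rfl, -, hherm, hdet⟩
  subst hp
  set i0 : Fin d := ⟨0, by omega⟩ with hi0
  -- extract the determinant identity over ℂ
  have Hdet : ∀ x : Fin d → ℂ, (1 + ∑ i, x i • A i).det
      = (x i0 + 1)^2 - ∑ i ∈ Finset.univ \ {i0}, (x i)^2 := by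
    intro x
    have h := congrArg (MvPolynomial.eval x) hdet
    rw [RingHom.map_det, RingHom.mapMatrix_apply] at h
    have hL : (Matrix.of fun k l => C ((1 : Matrix (Fin n) (Fin n) ℂ) k l)
        + ∑ i, X i * C (A i k l)).map (MvPolynomial.eval x) = 1 + ∑ i, x i • A i := by
      ext k l
      simp [Matrix.map_apply, Matrix.add_apply, Matrix.sum_apply, Matrix.smul_apply,
        Matrix.one_apply, mul_comm]
    rw [hL] at h
    rw [h]
    simp [apply_ite]
  set P := A i0 with hPdef
  -- P is an idempotent
  have hP : P * P = P := by
    apply core2 (hherm i0)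
    intro z
    have h := Hdet (fun k => if k = i0 then z else if k = ⟨1, by omega⟩ then 0
      else if k = ⟨2, by omega⟩ then 0 else 0)
    rw [sum_ite3 A i0 ⟨1, by omega⟩ ⟨2, by omega⟩ (by simp [hi0, Fin.mk.injEq])
      (by simp [hi0, Fin.mk.injEq]) (by simp [Fin.mk.injEq]),
      sum_ite3_sq i0 ⟨1, by omega⟩ ⟨2, by omega⟩ (by simp [hi0, Fin.mk.injEq])
      (by simp [hi0, Fin.mk.injEq]) (by simp [Fin.mk.injEq])] at h
    simp only [eq_self_iff_true, if_true, zero_smul, add_zero] at h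
    rw [h]
    ring
  have hdet4 : (1 + P).det = 4 := by
    have h := Hdet (fun k => if k = i0 then 1 else if k = ⟨1, by omega⟩ then 0
      else if k = ⟨2, by omega⟩ then 0 else 0)
    rw [sum_ite3 A i0 ⟨1, by omega⟩ ⟨2, by omega⟩ (by simp [hi0, Fin.mk.injEq])
      (by simp [hi0, Fin.mk.injEq]) (by simp [Fin.mk.injEq]),
      sum_ite3_sq i0 ⟨1, by omega⟩ ⟨2, by omega⟩ (by simp [hi0, Fin.mk.injEq])
      (by simp [hi0, Fin.mk.injEq]) (by simp [Fin.mk.injEq])] at h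
    simp only [eq_self_iff_true, if_true, zero_smul, add_zero, one_smul] at h
    rw [h]
    norm_num
  -- structure of the other coefficient matrices
  have main : ∀ i : Fin d, i ≠ i0 → P * A i = A i ∧ A i * P = A i ∧ A i * A i = P := by
    intro i hi
    obtain ⟨j, hj0, hji⟩ : ∃ j : Fin d, j ≠ i0 ∧ i ≠ j := by
      by_cases h : i = ⟨1, by omega⟩
      · exact ⟨⟨2, by omega⟩, by simp [hi0, Fin.mk.injEq], by rw [h]; simp [Fin.mk.injEq]⟩
      · exact ⟨⟨1, by omega⟩, by simp [hi0, Fin.mk.injEq], h⟩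
    have hA3 : A i * A i * A i = A i := by
      have h := key3 A hherm i0 Hdet i j hi hj0 hji 0 1 0
      norm_num at h
      exact h
    have hpp : (P + A i)*(P + A i)*(P + A i) = (2:ℂ) • ((P + A i)*(P + A i)) := by
      have h := key3 A hherm i0 Hdet i j hi hj0 hji 1 1 0
      norm_num at h
      exact h
    have hpm : (P - A i)*(P - A i)*(P - A i) = (2:ℂ) • ((P - A i)*(P - A i)) := by
      have h := key3 A hherm i0 Hdet i j hi hj0 hji 1 (-1) 0
      norm_num [sub_eq_add_neg] at h
      exact h
    exact structure_lemma (hherm i0) (hherm i) hP hA3 hpp hpm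
  have hanti : ∀ i j : Fin d, i ≠ i0 → j ≠ i0 → i ≠ j → A i * A j = -(A j * A i) := by
    intro i j hi hj hij
    obtain ⟨hPA, hAP, hA2⟩ := main i hi
    obtain ⟨hPB, hBP, hB2⟩ := main j hj
    have r1 : (P + A i + A j)*(P + A i + A j)*(P + A i + A j)
        = (2:ℂ) • ((P + A i + A j)*(P + A i + A j)) + (P + A i + A j) := by
      have h := key3 A hherm i0 Hdet i j hi hj hij 1 1 1
      norm_num at h
      exact h
    have r2 : (P + A i - A j)*(P + A i - A j)*(P + A i - A j)
        = (2:ℂ) • ((P + A i - A j)*(P + A i - A j)) + (P + A i - A j) := by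
      have h := key3 A hherm i0 Hdet i j hi hj hij 1 1 (-1)
      norm_num at h
      rw [sub_eq_add_neg]
      exact h
    exact anti_lemma hP hPA hAP hA2 hPB hBP hB2 r1 r2
  -- the four matrices
  set ι : Fin 4 → Fin d := fun k => ⟨k.val + 1, by omega⟩ with hι
  have hι0 : ∀ k, ι k ≠ i0 := by
    intro k
    simp [hι, hi0, Fin.mk.injEq]
  have hιinj : ∀ k l : Fin 4, k ≠ l → ι k ≠ ι l := by
    intro k l hkl h
    apply hkl
    have := congrArg Fin.val h
    simp [hι] at this
    exact Fin.ext this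
  exact reduction (hherm i0) hP hdet4 (fun k => A (ι k)) (fun k => hherm (ι k))
    (fun k => (main (ι k) (hι0 k)).1) (fun k => (main (ι k) (hι0 k)).2.1)
    (fun k => (main (ι k) (hι0 k)).2.2)
    (fun k l hkl => hanti (ι k) (ι l) (hι0 k) (hι0 l) (hιinj k l hkl))
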